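/- Let ρ be a symmetric probability measure on ℝ (invariant under x ↦ -x) with finite first moment. Then ρ is a fixed point of LL_d if and only if it is a fixed point of LL⁺_d; in fact LL⁺_d(ρ) = LL_d(ρ) for every symmetric ρ. -/

import Mathlib

open MeasureTheory ProbabilityTheory Real
open scoped NNReal ENNReal

/-- Codomain family: one `ℕ`-valued variable (the Poisson count) and, for each `n : ℕ`,
three real variables `ηₙ, sₙ, sₙ'`. -/
abbrev llCod : Unit ⊕ (ℕ × Fin 3) → Type := Sum.elim (fun _ => ℕ) (fun _ => ℝ)

def llMS : ∀ i : Unit ⊕ (ℕ × Fin 3), MeasurableSpace (llCod i)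
  | Sum.inl _ => (inferInstance : MeasurableSpace ℕ)
  | Sum.inr _ => (inferInstance : MeasurableSpace ℝ)

def llFam {Ω : Type*} (D : Ω → ℕ) (η s s' : ℕ → Ω → ℝ) :
    ∀ i : Unit ⊕ (ℕ × Fin 3), Ω → llCod i
  | Sum.inl _ => D
  | Sum.inr (n, j) => if j = 0 then η n else if j = 1 then s n else s' n

/-- The uniform distribution on the two signs `{±1} ⊆ ℝ`. -/
noncomputable def signLaw : Measure ℝ :=
  (1 / 2 : ℝ≥0∞) • Measure.dirac (1 : ℝ) + (1 / 2 : ℝ≥0∞) • Measure.dirac (-1 : ℝ)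

/- ### Auxiliary material -/

lemma aux_prod_smul_right {α β : Type*} [MeasurableSpace α] [MeasurableSpace β]
    (μ : Measure α) (ν : Measure β) [SFinite μ] [SFinite ν] (c : ℝ≥0∞) :
    μ.prod (c • ν) = c • μ.prod ν := by
  ext S hS
  rw [Measure.prod_apply hS, Measure.smul_apply, Measure.prod_apply hS, smul_eq_mul,
    ← MeasureTheory.lintegral_const_mul _ (measurable_measure_prodMk_left hS)]
  simp

lemma aux_smul_prod_left {α β : Type*} [MeasurableSpace α] [MeasurableSpace β]
    (μ : Measure α) (ν : Measure β) [SFinite μ] [SFinite ν] (c : ℝ≥0∞) :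
    (c • μ).prod ν = c • μ.prod ν := by
  ext S hS
  rw [Measure.prod_apply hS, Measure.smul_apply, Measure.prod_apply hS, smul_eq_mul,
    lintegral_smul_measure, smul_eq_mul]

instance : IsProbabilityMeasure signLaw := by
  constructor
  simp [signLaw]
  rw [ENNReal.inv_two_add_inv_two]

lemma aux_map_add_of_indep {Ω : Type*} [MeasurableSpace Ω] {P : Measure Ω}
    [IsFiniteMeasure P] {X Y : Ω → ℝ} (hX : Measurable X) (hY : Measurable Y)
    (h : IndepFun X Y P) :
    P.map (fun ω => X ω + Y ω) =
      ((P.map X).prod (P.map Y)).map (fun p : ℝ × ℝ => p.1 + p.2) := by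
  rw [← (indepFun_iff_map_prod_eq_prod_map_map hX.aemeasurable hY.aemeasurable).mp h,
    Measure.map_map measurable_add (hX.prodMk hY)]
  rfl

lemma aux_measurable_tanh : Measurable Real.tanh := by
  have h : Continuous Real.tanh := by
    have : Real.tanh = fun x => Real.sinh x / Real.cosh x :=
      funext fun x => Real.tanh_eq_sinh_div_cosh x
    rw [this]
    exact Real.continuous_sinh.div Real.continuous_cosh fun x => (Real.cosh_pos x).ne'
  exact h.measurable

noncomputable def gOne : ℝ × ℝ × ℝ → ℝ :=
  fun x => -(x.2.1 * Real.log ((1 - x.2.1 * Real.tanh (x.1 / 2)) / 2))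

noncomputable def gTwo : ℝ × ℝ × ℝ → ℝ :=
  fun x => x.2.1 * Real.log ((1 + x.2.2 * Real.tanh (x.1 / 2)) / 2)

lemma measurable_gOne : Measurable gOne :=
  (measurable_snd.fst.mul
    (Real.measurable_log.comp
      (((measurable_const.sub
        (measurable_snd.fst.mul
          (aux_measurable_tanh.comp (measurable_fst.div_const 2)))).div_const 2))) ).neg

lemma measurable_gTwo : Measurable gTwo :=
  measurable_snd.fst.mul
    (Real.measurable_log.comp
      ((measurable_const.add
        (measurable_snd.snd.mul
          (aux_measurable_tanh.comp (measurable_fst.div_const 2)))).div_const 2))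

lemma aux_core (ρ : Measure ℝ) [IsProbabilityMeasure ρ]
    (hsym : ρ.map (fun x => -x) = ρ) :
    (ρ.prod (signLaw.prod signLaw)).map gOne = (ρ.prod (signLaw.prod signLaw)).map gTwo := by
  have hmn : Measurable fun x : ℝ => -x := measurable_neg
  have hflip : ∀ (c e : ℝ),
      ρ.map (fun x => c * Real.log ((1 + e * Real.tanh (x / 2)) / 2)) =
      ρ.map (fun x => c * Real.log ((1 - e * Real.tanh (x / 2)) / 2)) := by
    intro c e
    conv_rhs => rw [← hsym]
    rw [Measure.map_map (by
      exact measurable_const.mul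
        (Real.measurable_log.comp
          ((measurable_const.sub
            (measurable_const.mul
              (aux_measurable_tanh.comp (measurable_id.div_const 2)))).div_const 2))) hmn]
    congr 1
    funext x
    simp only [Function.comp_apply, neg_div, Real.tanh_neg, mul_neg, sub_neg_eq_add]
  have hmk : ∀ p : ℝ × ℝ, Measurable fun x : ℝ => (x, p.1, p.2) :=
    fun p => measurable_id.prodMk measurable_const
  have hσ : signLaw.prod signLaw =
      (1/2 : ℝ≥0∞) • ((1/2 : ℝ≥0∞) • Measure.dirac ((1:ℝ), (1:ℝ))
        + (1/2 : ℝ≥0∞) • Measure.dirac ((1:ℝ), (-1:ℝ)))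
      + (1/2 : ℝ≥0∞) • ((1/2 : ℝ≥0∞) • Measure.dirac ((-1:ℝ), (1:ℝ))
        + (1/2 : ℝ≥0∞) • Measure.dirac ((-1:ℝ), (-1:ℝ))) := by
    rw [show signLaw.prod signLaw =
        ((1 / 2 : ℝ≥0∞) • Measure.dirac (1 : ℝ)
          + (1 / 2 : ℝ≥0∞) • Measure.dirac (-1 : ℝ)).prod signLaw from rfl,
      Measure.add_prod, aux_smul_prod_left, aux_smul_prod_left,
      Measure.dirac_prod, Measure.dirac_prod, signLaw]
    rw [Measure.map_add _ _ measurable_prodMk_left, Measure.map_add _ _ measurable_prodMk_left,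
      Measure.map_smul, Measure.map_smul, Measure.map_smul, Measure.map_smul,
      Measure.map_dirac' measurable_prodMk_left, Measure.map_dirac' measurable_prodMk_left,
      Measure.map_dirac' measurable_prodMk_left, Measure.map_dirac' measurable_prodMk_left]
  have hexp : ρ.prod (signLaw.prod signLaw) =
      (1/2 : ℝ≥0∞) • ((1/2 : ℝ≥0∞) • ρ.map (fun x => (x, (1:ℝ), (1:ℝ)))
        + (1/2 : ℝ≥0∞) • ρ.map (fun x => (x, (1:ℝ), (-1:ℝ))))
      + (1/2 : ℝ≥0∞) • ((1/2 : ℝ≥0∞) • ρ.map (fun x => (x, (-1:ℝ), (1:ℝ)))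
        + (1/2 : ℝ≥0∞) • ρ.map (fun x => (x, (-1:ℝ), (-1:ℝ)))) := by
    rw [hσ, Measure.prod_add, aux_prod_smul_right, aux_prod_smul_right, Measure.prod_add,
      Measure.prod_add, aux_prod_smul_right, aux_prod_smul_right, aux_prod_smul_right,
      aux_prod_smul_right, Measure.prod_dirac, Measure.prod_dirac, Measure.prod_dirac,
      Measure.prod_dirac]
  rw [hexp]
  have hmap : ∀ (g : ℝ × ℝ × ℝ → ℝ), Measurable g → ∀ a b : ℝ,
      (ρ.map (fun x => (x, a, b))).map g = ρ.map (fun x => g (x, a, b)) := by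
    intro g hg a b
    rw [Measure.map_map hg (show Measurable fun x : ℝ => (x, a, b) from
      measurable_id.prodMk measurable_const)]
    rfl
  simp only [Measure.map_add _ _ measurable_gOne, Measure.map_add _ _ measurable_gTwo,
    Measure.map_smul, hmap _ measurable_gOne, hmap _ measurable_gTwo]
  have hee : ∀ c e : ℝ,
      ρ.map (fun x => c * Real.log ((1 - e * Real.tanh (x / 2)) / 2)) =
      ρ.map (fun x => c * Real.log ((1 + e * Real.tanh (x / 2)) / 2)) :=
    fun c e => (hflip c e).symm
  have k1 : ∀ b : ℝ, (fun x : ℝ => gOne (x, (1:ℝ), b)) =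
      fun x : ℝ => (-1 : ℝ) * Real.log ((1 - (1:ℝ) * Real.tanh (x / 2)) / 2) := by
    intro b; funext x; simp only [gOne, one_mul, neg_one_mul]
  have k2 : ∀ b : ℝ, (fun x : ℝ => gOne (x, (-1:ℝ), b)) =
      fun x : ℝ => (1 : ℝ) * Real.log ((1 + (1:ℝ) * Real.tanh (x / 2)) / 2) := by
    intro b; funext x
    simp only [gOne, one_mul, neg_one_mul, neg_neg, mul_neg, sub_neg_eq_add]
  have k3 : ∀ a b : ℝ, (fun x : ℝ => gTwo (x, a, b)) =
      fun x : ℝ => a * Real.log ((1 + b * Real.tanh (x / 2)) / 2) := by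
    intro a b; rfl
  have k4 : ∀ c e : ℝ,
      (fun x : ℝ => c * Real.log ((1 + -e * Real.tanh (x / 2)) / 2)) =
      fun x : ℝ => c * Real.log ((1 - e * Real.tanh (x / 2)) / 2) := by
    intro c e; funext x; rw [neg_mul, ← sub_eq_add_neg]
  rw [k1, k1, k2, k2, k3, k3, k3, k3,
    show ((-1:ℝ)) = -(1:ℝ) from rfl, k4, hee, hee, k4, hee]
  abel

/-- The triple `(ηₙ, sₙ, sₙ')` as a single random variable. -/
def llW {Ω : Type*} (η s s' : ℕ → Ω → ℝ) (n : ℕ) (ω : Ω) : ℝ × ℝ × ℝ :=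
  (η n ω, s n ω, s' n ω)

/-- Let `ρ` be a symmetric probability measure on `ℝ` with finite first moment.  With
`D ~ Poisson(d)`, `ηᵢ` i.i.d. with law `ρ` and `sᵢ, sᵢ'` independent uniform signs, all
jointly independent, the law `LL⁺_d(ρ)` of `-∑_{i<D} sᵢ log((1-sᵢ tanh(ηᵢ/2))/2)` equals
the law `LL_d(ρ)` of `∑_{i<D} sᵢ log((1+sᵢ' tanh(ηᵢ/2))/2)`; in particular `ρ` is a fixed
point of `LL_d` if and only if it is a fixed point of `LL⁺_d`. -/
theorem stmt_10 (d : ℝ≥0) (hd0 : 0 < d)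
    (ρ : Measure ℝ) [IsProbabilityMeasure ρ]
    (hsym : ρ.map (fun x => -x) = ρ)
    (hmom : ∫⁻ x, ENNReal.ofReal |x| ∂ρ < ∞)
    {Ω : Type*} [MeasurableSpace Ω] (P : Measure Ω) [IsProbabilityMeasure P]
    (D : Ω → ℕ) (η s s' : ℕ → Ω → ℝ)
    (measD : Measurable D) (measη : ∀ n, Measurable (η n))
    (meass : ∀ n, Measurable (s n)) (meass' : ∀ n, Measurable (s' n))
    (lawD : P.map D = (poissonPMF d).toMeasure)
    (lawη : ∀ n, P.map (η n) = ρ)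
    (laws : ∀ n, P.map (s n) = signLaw) (laws' : ∀ n, P.map (s' n) = signLaw)
    (indep : iIndepFun (m := llMS) (llFam D η s s') P) :
    P.map (fun ω => -∑ i ∈ Finset.range (D ω),
        s i ω * Real.log ((1 - s i ω * Real.tanh (η i ω / 2)) / 2)) =
      P.map (fun ω => ∑ i ∈ Finset.range (D ω),
        s i ω * Real.log ((1 + s' i ω * Real.tanh (η i ω / 2)) / 2)) ∧
    ((P.map (fun ω => -∑ i ∈ Finset.range (D ω),
        s i ω * Real.log ((1 - s i ω * Real.tanh (η i ω / 2)) / 2)) = ρ) ↔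
      (P.map (fun ω => ∑ i ∈ Finset.range (D ω),
        s i ω * Real.log ((1 + s' i ω * Real.tanh (η i ω / 2)) / 2)) = ρ)) := by
  classical
  letI : ∀ i : Unit ⊕ ℕ × Fin 3, MeasurableSpace (llCod i) := llMS
  set W := llW η s s' with hWdef
  have hWm : ∀ n, Measurable (W n) :=
    fun n => (measη n).prodMk ((meass n).prodMk (meass' n))
  have hfm : ∀ i, Measurable (llFam D η s s' i) := by
    rintro (⟨⟩ | ⟨n, j⟩)
    · exact measD
    · fin_cases j
      · exact measη n
      · exact meass n
      · exact meass' n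
  -- law of the triple
  have hW : ∀ n, P.map (W n) = ρ.prod (signLaw.prod signLaw) := by
    intro n
    have h12 : IndepFun (s n) (s' n) P :=
      indep.indepFun (show (Sum.inr (n, 1) : Unit ⊕ ℕ × Fin 3) ≠ Sum.inr (n, 2) by simp)
    have hps : IndepFun (fun ω => (s n ω, s' n ω)) (η n) P :=
      indep.indepFun_prodMk hfm (Sum.inr (n, 1)) (Sum.inr (n, 2)) (Sum.inr (n, 0))
        (by simp) (by simp)
    have hη : IndepFun (η n) (fun ω => (s n ω, s' n ω)) P := hps.symm
    have : P.map (W n) = P.map (fun ω => (η n ω, s n ω, s' n ω)) := rfl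
    rw [this,
      (indepFun_iff_map_prod_eq_prod_map_map (measη n).aemeasurable
        ((meass n).prodMk (meass' n)).aemeasurable).mp hη,
      lawη n,
      (indepFun_iff_map_prod_eq_prod_map_map (meass n).aemeasurable
        (meass' n).aemeasurable).mp h12, laws n, laws' n]
  -- equality of laws of single summands
  have hXlaw : ∀ n, P.map (fun ω => gOne (W n ω)) = P.map (fun ω => gTwo (W n ω)) := by
    intro n
    rw [show (fun ω => gOne (W n ω)) = gOne ∘ W n from rfl,
      show (fun ω => gTwo (W n ω)) = gTwo ∘ W n from rfl,
      ← Measure.map_map measurable_gOne (hWm n), ← Measure.map_map measurable_gTwo (hWm n),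
      hW n, aux_core ρ hsym]
  -- index sets
  set Sn : ℕ → Finset (Unit ⊕ ℕ × Fin 3) :=
    fun n => (Finset.range n ×ˢ (Finset.univ : Finset (Fin 3))).image Sum.inr with hSn
  have memS : ∀ {n i : ℕ} (j : Fin 3), i < n → Sum.inr (i, j) ∈ Sn n := by
    intro n i j hi
    exact Finset.mem_image.2 ⟨(i, j),
      Finset.mem_product.2 ⟨Finset.mem_range.2 hi, Finset.mem_univ _⟩, rfl⟩
  -- independence of a partial sum from the next summand
  have key : ∀ (g : ℝ × ℝ × ℝ → ℝ), Measurable g → ∀ n : ℕ,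
      IndepFun (fun ω => ∑ i ∈ Finset.range n, g (W i ω)) (fun ω => g (W n ω)) P := by
    intro g hg n
    set Tn : Finset (Unit ⊕ ℕ × Fin 3) :=
      (({n} : Finset ℕ) ×ˢ (Finset.univ : Finset (Fin 3))).image Sum.inr with hTn
    have memT : ∀ j : Fin 3, Sum.inr (n, j) ∈ Tn := by
      intro j
      exact Finset.mem_image.2 ⟨(n, j),
        Finset.mem_product.2 ⟨Finset.mem_singleton_self _, Finset.mem_univ _⟩, rfl⟩
    have hdisj : Disjoint (Sn n) Tn := by
      rw [Finset.disjoint_left]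
      rintro x hx hx'
      simp only [hSn, hTn, Finset.mem_image, Finset.mem_product, Finset.mem_range,
        Finset.mem_singleton, Finset.mem_univ, and_true] at hx hx'
      obtain ⟨⟨i, j⟩, hi, rfl⟩ := hx
      obtain ⟨⟨i', j'⟩, hi', he⟩ := hx'
      cases Sum.inr.inj he
      omega
    have h := indep.indepFun_finset (Sn n) Tn hdisj hfm
    set φ : (∀ i : (Sn n : Finset (Unit ⊕ ℕ × Fin 3)), llCod i) → ℝ :=
      fun v => ∑ i ∈ (Finset.range n).attach,
        g (v ⟨Sum.inr (i.1, 0), memS 0 (Finset.mem_range.1 i.2)⟩,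
           v ⟨Sum.inr (i.1, 1), memS 1 (Finset.mem_range.1 i.2)⟩,
           v ⟨Sum.inr (i.1, 2), memS 2 (Finset.mem_range.1 i.2)⟩) with hφdef
    set ψ : (∀ i : (Tn : Finset (Unit ⊕ ℕ × Fin 3)), llCod i) → ℝ :=
      fun v => g (v ⟨Sum.inr (n, 0), memT 0⟩, v ⟨Sum.inr (n, 1), memT 1⟩,
        v ⟨Sum.inr (n, 2), memT 2⟩) with hψdef
    have hφ : Measurable φ :=
      Finset.measurable_sum _ fun i _ => hg.comp
        ((measurable_pi_apply _).prodMk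
          ((measurable_pi_apply _).prodMk (measurable_pi_apply _)))
    have hψ : Measurable ψ :=
      hg.comp ((measurable_pi_apply _).prodMk
        ((measurable_pi_apply _).prodMk (measurable_pi_apply _)))
    have hc := h.comp hφ hψ
    have e1 : (φ ∘ fun a (i : (Sn n : Finset (Unit ⊕ ℕ × Fin 3))) => llFam D η s s' i a)
        = fun ω => ∑ i ∈ Finset.range n, g (W i ω) := by
      funext a
      exact Finset.sum_attach (Finset.range n) (fun i => g (W i a))
    have e2 : (ψ ∘ fun a (i : (Tn : Finset (Unit ⊕ ℕ × Fin 3))) => llFam D η s s' i a)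
        = fun ω => g (W n ω) := rfl
    rwa [e1, e2] at hc
  -- independence of D from partial sums
  have keyD : ∀ (g : ℝ × ℝ × ℝ → ℝ), Measurable g → ∀ n : ℕ,
      IndepFun D (fun ω => ∑ i ∈ Finset.range n, g (W i ω)) P := by
    intro g hg n
    have hdisj : Disjoint ({Sum.inl ()} : Finset (Unit ⊕ ℕ × Fin 3)) (Sn n) := by
      rw [Finset.disjoint_left]
      rintro x hx hx'
      simp only [Finset.mem_singleton] at hx
      subst hx
      simp only [hSn, Finset.mem_image] at hx'
      obtain ⟨p, _, he⟩ := hx'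
      exact Sum.inr_ne_inl he
    have h := indep.indepFun_finset ({Sum.inl ()} : Finset (Unit ⊕ ℕ × Fin 3)) (Sn n)
      hdisj hfm
    set φD : (∀ i : (({Sum.inl ()} : Finset (Unit ⊕ ℕ × Fin 3)) :
        Finset (Unit ⊕ ℕ × Fin 3)), llCod i) → ℕ :=
      fun v => v ⟨Sum.inl (), Finset.mem_singleton_self _⟩ with hφD
    set φ : (∀ i : (Sn n : Finset (Unit ⊕ ℕ × Fin 3)), llCod i) → ℝ :=
      fun v => ∑ i ∈ (Finset.range n).attach,
        g (v ⟨Sum.inr (i.1, 0), memS 0 (Finset.mem_range.1 i.2)⟩,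
           v ⟨Sum.inr (i.1, 1), memS 1 (Finset.mem_range.1 i.2)⟩,
           v ⟨Sum.inr (i.1, 2), memS 2 (Finset.mem_range.1 i.2)⟩) with hφdef
    have hφDm : Measurable φD := measurable_pi_apply _
    have hφ : Measurable φ :=
      Finset.measurable_sum _ fun i _ => hg.comp
        ((measurable_pi_apply _).prodMk
          ((measurable_pi_apply _).prodMk (measurable_pi_apply _)))
    have hc := h.comp hφDm hφ
    have e1 : (φD ∘ fun a (i : (({Sum.inl ()} : Finset (Unit ⊕ ℕ × Fin 3)) :
        Finset (Unit ⊕ ℕ × Fin 3))) => llFam D η s s' i a) = D := rfl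
    have e2 : (φ ∘ fun a (i : (Sn n : Finset (Unit ⊕ ℕ × Fin 3))) => llFam D η s s' i a)
        = fun ω => ∑ i ∈ Finset.range n, g (W i ω) := by
      funext a
      exact Finset.sum_attach (Finset.range n) (fun i => g (W i a))
    rwa [e1, e2] at hc
  -- measurability of partial sums
  have msum : ∀ (g : ℝ × ℝ × ℝ → ℝ), Measurable g → ∀ n : ℕ,
      Measurable fun ω => ∑ i ∈ Finset.range n, g (W i ω) :=
    fun g hg n => Finset.measurable_sum _ fun i _ => hg.comp (hWm i)
  -- equality of laws of partial sums, by induction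
  have hind : ∀ n : ℕ, P.map (fun ω => ∑ i ∈ Finset.range n, gOne (W i ω))
      = P.map (fun ω => ∑ i ∈ Finset.range n, gTwo (W i ω)) := by
    intro n
    induction n with
    | zero => simp
    | succ n ih =>
      have e1 : (fun ω => ∑ i ∈ Finset.range (n + 1), gOne (W i ω))
          = fun ω => (∑ i ∈ Finset.range n, gOne (W i ω)) + gOne (W n ω) :=
        funext fun ω => Finset.sum_range_succ _ _
      have e2 : (fun ω => ∑ i ∈ Finset.range (n + 1), gTwo (W i ω))
          = fun ω => (∑ i ∈ Finset.range n, gTwo (W i ω)) + gTwo (W n ω) :=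
        funext fun ω => Finset.sum_range_succ _ _
      rw [e1, e2,
        aux_map_add_of_indep (msum _ measurable_gOne n)
          (show Measurable fun ω => gOne (W n ω) from measurable_gOne.comp (hWm n))
          (key gOne measurable_gOne n),
        aux_map_add_of_indep (msum _ measurable_gTwo n)
          (show Measurable fun ω => gTwo (W n ω) from measurable_gTwo.comp (hWm n))
          (key gTwo measurable_gTwo n),
        ih, hXlaw n]
  -- measurability of the random sums
  have mF : ∀ (g : ℝ × ℝ × ℝ → ℝ), Measurable g →
      Measurable fun ω => ∑ i ∈ Finset.range (D ω), g (W i ω) := by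
    intro g hg
    have h : Measurable fun p : Ω × ℕ => ∑ i ∈ Finset.range p.2, g (W i p.1) :=
      measurable_from_prod_countable_left fun n => msum g hg n
    exact h.comp (measurable_id.prodMk measD)
  -- the main equality
  have hfinal : P.map (fun ω => ∑ i ∈ Finset.range (D ω), gOne (W i ω))
      = P.map (fun ω => ∑ i ∈ Finset.range (D ω), gTwo (W i ω)) := by
    ext A hA
    rw [Measure.map_apply (mF gOne measurable_gOne) hA,
      Measure.map_apply (mF gTwo measurable_gTwo) hA]
    have hdec : ∀ (g : ℝ × ℝ × ℝ → ℝ),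
        (fun ω => ∑ i ∈ Finset.range (D ω), g (W i ω)) ⁻¹' A
          = ⋃ n, (D ⁻¹' {n}) ∩ ((fun ω => ∑ i ∈ Finset.range n, g (W i ω)) ⁻¹' A) := by
      intro g
      ext ω
      simp only [Set.mem_preimage, Set.mem_iUnion, Set.mem_inter_iff, Set.mem_singleton_iff]
      constructor
      · intro h; exact ⟨D ω, rfl, h⟩
      · rintro ⟨n, hn, h⟩; rw [show D ω = n from hn]; exact h
    have hdisjU : ∀ (g : ℝ × ℝ × ℝ → ℝ), Pairwise (Function.onFun Disjoint
        fun n => (D ⁻¹' {n}) ∩ ((fun ω => ∑ i ∈ Finset.range n, g (W i ω)) ⁻¹' A)) := by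
      intro g m n hmn
      refine Set.disjoint_left.mpr ?_
      rintro ω ⟨h1, -⟩ ⟨h2, -⟩
      exact hmn ((Set.mem_singleton_iff.1 h1).symm.trans (Set.mem_singleton_iff.1 h2))
    have hmeasU : ∀ (g : ℝ × ℝ × ℝ → ℝ), Measurable g → ∀ n : ℕ, MeasurableSet
        ((D ⁻¹' {n}) ∩ ((fun ω => ∑ i ∈ Finset.range n, g (W i ω)) ⁻¹' A)) :=
      fun g hg n => (measD (measurableSet_singleton n)).inter ((msum g hg n) hA)
    rw [hdec gOne, hdec gTwo,
      measure_iUnion (hdisjU gOne) (hmeasU gOne measurable_gOne),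
      measure_iUnion (hdisjU gTwo) (hmeasU gTwo measurable_gTwo)]
    refine tsum_congr fun n => ?_
    rw [(keyD gOne measurable_gOne n).measure_inter_preimage_eq_mul {n} A
        (measurableSet_singleton n) hA,
      (keyD gTwo measurable_gTwo n).measure_inter_preimage_eq_mul {n} A
        (measurableSet_singleton n) hA]
    congr 1
    rw [← Measure.map_apply (msum gOne measurable_gOne n) hA,
      ← Measure.map_apply (msum gTwo measurable_gTwo n) hA, hind n]
  -- translate the goal
  have eL : (fun ω => -∑ i ∈ Finset.range (D ω),
      s i ω * Real.log ((1 - s i ω * Real.tanh (η i ω / 2)) / 2))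
      = fun ω => ∑ i ∈ Finset.range (D ω), gOne (W i ω) := by
    funext ω
    rw [show (fun i => gOne (W i ω)) = fun i =>
      -(s i ω * Real.log ((1 - s i ω * Real.tanh (η i ω / 2)) / 2)) from rfl]
    rw [Finset.sum_neg_distrib]
  have eR : (fun ω => ∑ i ∈ Finset.range (D ω),
      s i ω * Real.log ((1 + s' i ω * Real.tanh (η i ω / 2)) / 2))
      = fun ω => ∑ i ∈ Finset.range (D ω), gTwo (W i ω) := rfl
  rw [eL, eR, hfinal]
  exact ⟨rfl, Iff.rfl⟩
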